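/- arXiv:2202.12054 — 2 statements merged into one kernel-verified Lean document; each statement's English description precedes it below -/
import Mathlib

section
/- Let G be a finite abelian group with exp(G) = 4 (so G ≅ C₂^r ⊕ C₄^t with t ≥ 1). The complete integral closure of ℬ_±(G) in ℱ(G) is {S ∈ ℱ(G) : σ(S) ∈ 2G}. -/
def IsWZS {G : Type*} [AddCommGroup G] (Γ : Set (G →+ G)) (S : Multiset G) : Prop :=
  ∃ T : Multiset (G × (G →+ G)),
    (∀ p ∈ T, p.2 ∈ Γ) ∧ T.map Prod.fst = S ∧ (T.map fun p => p.2 p.1).sum = 0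

def sigmaSet {G : Type*} [AddCommGroup G] (Γ : Set (G →+ G)) (S : Multiset G) : Set G :=
  {x | ∃ T : Multiset (G × (G →+ G)),
    (∀ p ∈ T, p.2 ∈ Γ) ∧ T.map Prod.fst = S ∧ (T.map fun p => p.2 p.1).sum = x}

def pmWeights (G : Type*) [AddCommGroup G] : Set (G →+ G) :=
  {AddMonoidHom.id G, -(AddMonoidHom.id G)}

def autWeights (G : Type*) [AddCommGroup G] : Set (G →+ G) :=
  {f : G →+ G | Function.Bijective ⇑f}

def IsAtomPM {G : Type*} [AddCommGroup G] (S : Multiset G) : Prop :=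
  S ≠ 0 ∧ IsWZS (pmWeights G) S ∧
    ∀ A B : Multiset G, IsWZS (pmWeights G) A → IsWZS (pmWeights G) B →
      A + B = S → A = 0 ∨ B = 0

def LSet {G : Type*} [AddCommGroup G] (B : Multiset G) : Set ℕ :=
  {ℓ | ∃ l : List (Multiset G), (∀ A ∈ l, IsAtomPM A) ∧ l.sum = B ∧ l.length = ℓ}

def BOver {G : Type*} [AddCommGroup G] (Γ : Set (G →+ G)) (G₀ : Set G) : Set (Multiset G) :=
  {S | (∀ g ∈ S, g ∈ G₀) ∧ IsWZS Γ S}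

def IsBasisTuple {G : Type*} [AddCommGroup G] {r : ℕ} (e : Fin r → G) : Prop :=
  (∀ i, e i ≠ 0) ∧
  (∀ m : Fin r → ℤ, (∑ i, m i • e i) = 0 → ∀ i, m i • e i = 0) ∧
  AddSubgroup.closure (Set.range e) = ⊤


lemma wzs_add {G : Type*} [AddCommGroup G] {Γ : Set (G →+ G)} {A B : Multiset G}
    (hA : IsWZS Γ A) (hB : IsWZS Γ B) : IsWZS Γ (A + B) := by
  obtain ⟨T1, h1, e1, s1⟩ := hA
  obtain ⟨T2, h2, e2, s2⟩ := hB
  refine ⟨T1 + T2, ?_, ?_, ?_⟩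
  · intro p hp
    rcases Multiset.mem_add.1 hp with h | h
    · exact h1 p h
    · exact h2 p h
  · simp [e1, e2]
  · simp [s1, s2]

lemma wzs_nsmul {G : Type*} [AddCommGroup G] {Γ : Set (G →+ G)} {A : Multiset G}
    (hA : IsWZS Γ A) (n : ℕ) : IsWZS Γ (n • A) := by
  induction n with
  | zero => exact ⟨0, by simp, by simp, by simp⟩
  | succ k ih =>
      rw [succ_nsmul]
      exact wzs_add ih hA

lemma wzs_of_sum_eq {G : Type*} [AddCommGroup G] {A B : Multiset G} (h : A.sum = B.sum) :
    IsWZS (pmWeights G) (A + B) := by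
  refine ⟨A.map (fun x => (x, AddMonoidHom.id G)) + B.map (fun x => (x, -(AddMonoidHom.id G))),
    ?_, ?_, ?_⟩
  · intro p hp
    rcases Multiset.mem_add.1 hp with h' | h' <;>
      simp only [Multiset.mem_map] at h' <;> obtain ⟨x, -, rfl⟩ := h' <;>
      simp [pmWeights]
  · simp [Multiset.map_map]
  · simp only [Multiset.map_add, Multiset.map_map, Multiset.sum_add, Function.comp]
    simp [Multiset.sum_map_neg', h]

lemma wzs_sum_mem {G : Type*} [AddCommGroup G] {S : Multiset G}
    (h : IsWZS (pmWeights G) S) : ∃ g : G, S.sum = g + g := by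
  obtain ⟨T, hT, hfst, hsum⟩ := h
  set d : G →+ G := AddMonoidHom.id G + AddMonoidHom.id G with hd
  have key : S.sum ∈ d.range := by
    have : S.sum = (T.map fun p => p.1 - p.2 p.1).sum := by
      rw [← hfst]
      rw [Multiset.sum_map_sub, hsum, sub_zero]
    rw [this]
    refine AddSubgroup.multiset_sum_mem _ _ ?_
    intro x hx
    obtain ⟨p, hp, rfl⟩ := Multiset.mem_map.1 hx
    rcases hT p hp with h2 | h2
    · exact ⟨0, by simp [hd, h2]⟩
    · rw [Set.mem_singleton_iff] at h2
      exact ⟨p.1, by simp [hd, h2, sub_neg_eq_add]⟩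
  obtain ⟨g, hg⟩ := key
  exact ⟨g, by simpa [hd] using hg.symm⟩

theorem stmt9 {G : Type*} [AddCommGroup G] [Fintype G]
    (hexp : AddMonoid.exponent G = 4) :
    {S : Multiset G | ∃ C : Multiset G, IsWZS (pmWeights G) C ∧
        ∀ n : ℕ, IsWZS (pmWeights G) (C + n • S)}
      = {S : Multiset G | ∃ g : G, S.sum = g + g} := by
  ext S
  simp only [Set.mem_setOf_eq]
  constructor
  · rintro ⟨C, hC, h⟩
    obtain ⟨gC, hgC⟩ := wzs_sum_mem hC
    obtain ⟨g1, hg1⟩ := wzs_sum_mem (h 1)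
    refine ⟨g1 - gC, ?_⟩
    have : C.sum + S.sum = g1 + g1 := by simpa using hg1
    have := this
    rw [hgC] at this
    linear_combination (norm := abel) this
  · rintro ⟨g, hg⟩
    refine ⟨({g} : Multiset G) + ({g} : Multiset G), wzs_of_sum_eq rfl, ?_⟩
    intro n
    rcases Nat.even_or_odd n with ⟨m, hm⟩ | ⟨m, hm⟩
    · have hrw : ({g} : Multiset G) + ({g} : Multiset G) + n • S
          = (({g} : Multiset G) + ({g} : Multiset G)) + m • (S + S) := by
        rw [hm, smul_add, add_nsmul]
      rw [hrw]
      exact wzs_add (wzs_of_sum_eq rfl) (wzs_nsmul (wzs_of_sum_eq rfl) m)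
    · have hrw : ({g} : Multiset G) + ({g} : Multiset G) + n • S
          = ((({g} : Multiset G) + ({g} : Multiset G)) + S) + m • (S + S) := by
        rw [hm, add_nsmul, one_nsmul, two_mul, add_nsmul, smul_add]
        abel
      rw [hrw]
      have hS : (({g} : Multiset G) + ({g} : Multiset G)).sum = S.sum := by
        simp [hg]
      exact wzs_add (wzs_of_sum_eq hS) (wzs_nsmul (wzs_of_sum_eq rfl) m)
end

section
/- Let G be a cyclic group of odd order n ≥ 3 and g a generator. For every k ∈ [1, n−1], the sequence gⁿ · g^{n−k} · (kg) in ℬ_±(G) has set of lengths exactly {2, n−k+1}. Consequently, [1, n−2] ⊆ Δ(ℬ_±(G)). -/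
open Multiset in
theorem wzs_iff {G : Type*} [AddCommGroup G] (S : Multiset G) :
    IsWZS (pmWeights G) S ↔ ∃ A B : Multiset G, A + B = S ∧ A.sum = B.sum := by
  classical
  constructor
  · rintro ⟨T, hmem, hmap, hsum⟩
    refine ⟨(T.filter (fun p => p.2 = AddMonoidHom.id G)).map Prod.fst,
      (T.filter (fun p => ¬ p.2 = AddMonoidHom.id G)).map Prod.fst, ?_, ?_⟩
    · rw [← Multiset.map_add, Multiset.filter_add_not, hmap]
    · have h1 : ((T.filter (fun p => p.2 = AddMonoidHom.id G)).map Prod.fst).sum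
          = ((T.filter (fun p => p.2 = AddMonoidHom.id G)).map (fun p => p.2 p.1)).sum := by
        congr 1
        apply Multiset.map_congr rfl
        intro p hp
        have := (Multiset.mem_filter.mp hp).2
        simp [this]
      have h2 : ((T.filter (fun p => ¬ p.2 = AddMonoidHom.id G)).map Prod.fst).sum
          = -((T.filter (fun p => ¬ p.2 = AddMonoidHom.id G)).map (fun p => p.2 p.1)).sum := by
        rw [← Multiset.sum_map_neg', Multiset.map_map]
        congr 1
        apply Multiset.map_congr rfl
        intro p hp
        have hp1 := Multiset.mem_filter.mp hp
        have := hmem p hp1.1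
        rcases this with h | h
        · exact absurd h hp1.2
        · have h' : p.2 = -(AddMonoidHom.id G) := h
          simp [h']
      have h3 : ((T.filter (fun p => p.2 = AddMonoidHom.id G)).map (fun p => p.2 p.1)).sum
          + ((T.filter (fun p => ¬ p.2 = AddMonoidHom.id G)).map (fun p => p.2 p.1)).sum = 0 := by
        rw [← Multiset.sum_add, ← Multiset.map_add, Multiset.filter_add_not, hsum]
      rw [h1, h2]
      linear_combination (norm := abel) h3
  · rintro ⟨A, B, hAB, hsum⟩
    refine ⟨A.map (fun a => (a, AddMonoidHom.id G)) + B.map (fun b => (b, -(AddMonoidHom.id G))), ?_, ?_, ?_⟩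
    · intro p hp
      rcases Multiset.mem_add.mp hp with h | h <;> simp_all [pmWeights]
      · obtain ⟨a, _, rfl⟩ := h; left; rfl
      · obtain ⟨a, _, rfl⟩ := h; right; rfl
    · simp [Multiset.map_map, hAB]
    · simp [Multiset.map_map, Function.comp_def, Multiset.sum_map_neg', hsum]
open Multiset

theorem sub_struct {G : Type*} [AddCommGroup G] {A : Multiset G} {j : ℕ} {g x : G}
    (h : A ≤ replicate j g + {x}) :
    ∃ a δ, a ≤ j ∧ δ ≤ 1 ∧ A = replicate a g + replicate δ x := by
  classical
  by_cases hx : x = g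
  · subst hx
    have hrep : replicate j x + ({x} : Multiset G) = replicate (j+1) x := by
      rw [add_comm, Multiset.singleton_add, ← Multiset.replicate_succ]
    rw [hrep] at h
    have hA : A = replicate (Multiset.card A) x := by
      apply Multiset.eq_replicate_card.mpr
      intro a ha
      exact Multiset.eq_of_mem_replicate (Multiset.mem_of_le h ha)
    have hcard : Multiset.card A ≤ j + 1 := by
      simpa using Multiset.card_le_card h
    rcases Nat.lt_or_ge (Multiset.card A) (j+1) with h1 | h1
    · exact ⟨Multiset.card A, 0, by omega, by omega, by simpa using hA⟩
    · have : Multiset.card A = j + 1 := by omega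
      refine ⟨j, 1, le_refl _, le_refl _, ?_⟩
      rw [hA, this, ← hrep, Multiset.replicate_one]
  · have hgx : g ≠ x := Ne.symm hx
    refine ⟨A.count g, A.count x, ?_, ?_, ?_⟩
    · have := Multiset.count_le_of_le g h
      simpa [Multiset.count_replicate, Multiset.count_singleton, hgx] using this
    · have := Multiset.count_le_of_le x h
      simpa [Multiset.count_replicate, Multiset.count_singleton, hgx] using this
    · ext y
      rw [Multiset.count_add, Multiset.count_replicate, Multiset.count_replicate]
      by_cases hy : y = g
      · subst hy
        simp [hx, hgx]
      · by_cases hy2 : y = x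
        · subst hy2
          simp [hx, hgx]
        · have h0 : A.count y = 0 := by
            have hle := Multiset.count_le_of_le y h
            rw [Multiset.count_add, Multiset.count_replicate, Multiset.count_singleton] at hle
            simpa [hy, hy2, Ne.symm hy, Ne.symm hy2] using hle
          simp [h0, Ne.symm hy, Ne.symm hy2]

theorem compl_struct {G : Type*} [AddCommGroup G] {A B : Multiset G} {j a δ : ℕ} {g x : G}
    (hAB : A + B = replicate j g + {x}) (ha : a ≤ j) (hδ : δ ≤ 1)
    (hA : A = replicate a g + replicate δ x) :
    B = replicate (j - a) g + replicate (1 - δ) x := by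
  have : A + (replicate (j - a) g + replicate (1 - δ) x) = replicate j g + {x} := by
    rw [hA]
    have h1 : replicate a g + replicate (j - a) g = replicate j g := by
      rw [← Multiset.replicate_add]; congr 1; omega
    have h2 : replicate δ x + replicate (1 - δ) x = ({x} : Multiset G) := by
      rw [← Multiset.replicate_add]
      have : δ + (1 - δ) = 1 := by omega
      rw [this, Multiset.replicate_one]
    calc replicate a g + replicate δ x + (replicate (j - a) g + replicate (1 - δ) x)
        = (replicate a g + replicate (j-a) g) + (replicate δ x + replicate (1-δ) x) := by abel
      _ = replicate j g + {x} := by rw [h1, h2]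
  exact add_left_cancel (hAB.trans this.symm)
open Multiset

section Char
variable {G : Type*} [AddCommGroup G] {g : G} {n : ℕ}

theorem smul_eq_iff_dvd (hord : addOrderOf g = n) (c d : ℕ) :
    c • g = d • g ↔ (n : ℤ) ∣ (c : ℤ) - d := by
  rw [← hord, addOrderOf_dvd_iff_zsmul_eq_zero, sub_smul, natCast_zsmul,
    natCast_zsmul, sub_eq_zero]

theorem wzs_rep_iff (hord : addOrderOf g = n) (h3 : 3 ≤ n) (hodd : Odd n) (j : ℕ) :
    IsWZS (pmWeights G) (replicate j g) ↔ 2 ∣ j ∨ n ≤ j := by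
  obtain ⟨m, hm⟩ := hodd
  constructor
  · rw [wzs_iff]
    rintro ⟨A, B, hAB, hsum⟩
    have hA : A ≤ replicate j g := hAB ▸ Multiset.le_add_right A B
    have hAe : A = replicate (Multiset.card A) g :=
      Multiset.eq_replicate_card.mpr fun a ha =>
        Multiset.eq_of_mem_replicate (Multiset.mem_of_le hA ha)
    set a := Multiset.card A with hadef
    have haj : a ≤ j := by simpa using Multiset.card_le_card hA
    have hB : B = replicate (j - a) g := by
      have : A + replicate (j - a) g = replicate j g := by
        rw [hAe, ← Multiset.replicate_add]
        congr 1; omega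
      exact add_left_cancel (hAB.trans this.symm)
    rw [hAe, hB, Multiset.sum_replicate, Multiset.sum_replicate,
      smul_eq_iff_dvd hord] at hsum
    obtain ⟨t, ht⟩ := hsum
    rw [Nat.cast_sub haj] at ht
    have h1 : (a : ℤ) - ((j : ℤ) - a) = n * t := ht
    have ha0 : (0:ℤ) ≤ (a:ℤ) := Nat.cast_nonneg a
    have haj' : (a:ℤ) ≤ j := Nat.cast_le.mpr haj
    have hbound : -(j : ℤ) ≤ n * t ∧ (n : ℤ) * t ≤ j := by
      constructor <;> linarith
    rcases lt_trichotomy t 0 with htn | htz | htp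
    · right
      have : (n : ℤ) * 1 ≤ n * (-t) := by
        apply mul_le_mul_of_nonneg_left (by omega) (by positivity)
      have : (n : ℤ) ≤ j := by nlinarith [hbound.1]
      exact_mod_cast this
    · left; rw [htz, mul_zero] at h1; omega
    · right
      have : (n : ℤ) * 1 ≤ n * t := by
        apply mul_le_mul_of_nonneg_left (by omega) (by positivity)
      have : (n : ℤ) ≤ j := by nlinarith [hbound.2]
      exact_mod_cast this
  · intro h
    rw [wzs_iff]
    have hcase : ∃ a : ℕ, a ≤ j ∧ (2 * a = j ∨ 2 * a = j + n) := by
      rcases Nat.even_or_odd j with he | ho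
      · obtain ⟨w, hw⟩ := he
        exact ⟨w, by omega, Or.inl (by omega)⟩
      · obtain ⟨w, hw⟩ := ho
        have hnj : n ≤ j := by
          rcases h with h2 | h2
          · exfalso; omega
          · exact h2
        exact ⟨(j + n) / 2, by omega, Or.inr (by omega)⟩
    obtain ⟨a, haj, heq⟩ := hcase
    refine ⟨replicate a g, replicate (j - a) g, ?_, ?_⟩
    · rw [← Multiset.replicate_add]; congr 1; omega
    · rw [Multiset.sum_replicate, Multiset.sum_replicate, smul_eq_iff_dvd hord,
        Nat.cast_sub haj]
      rcases heq with he | he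
      · exact ⟨0, by omega⟩
      · exact ⟨1, by omega⟩

theorem wzs_mix_iff (hord : addOrderOf g = n) (h3 : 3 ≤ n) (hodd : Odd n)
    {k : ℕ} (hk1 : 1 ≤ k) (hkn : k ≤ n - 1) {j : ℕ} (hj : j ≤ 2 * n - k) :
    IsWZS (pmWeights G) (replicate j g + {k • g}) ↔
      (k ≤ j ∧ j % 2 = k % 2) ∨ (n - k ≤ j ∧ j % 2 = (n - k) % 2) := by
  obtain ⟨m, hm⟩ := hodd
  constructor
  · rw [wzs_iff]
    rintro ⟨A, B, hAB, hsum⟩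
    have hA : A ≤ replicate j g + {k • g} := hAB ▸ Multiset.le_add_right A B
    obtain ⟨a, δ, haj, hδ, hAe⟩ := sub_struct hA
    have hBe := compl_struct hAB haj hδ hAe
    rw [hAe, hBe] at hsum
    have hsumA : (replicate a g + replicate δ (k • g)).sum = (a + δ * k) • g := by
      rw [Multiset.sum_add, Multiset.sum_replicate, Multiset.sum_replicate,
        smul_smul, ← add_nsmul]
    have hsumB : (replicate (j - a) g + replicate (1 - δ) (k • g)).sum
        = ((j - a) + (1 - δ) * k) • g := by
      rw [Multiset.sum_add, Multiset.sum_replicate, Multiset.sum_replicate,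
        smul_smul, ← add_nsmul]
    rw [hsumA, hsumB, smul_eq_iff_dvd hord] at hsum
    obtain ⟨t, ht⟩ := hsum
    have hcast : ((a + δ * k : ℕ) : ℤ) - ((j - a + (1 - δ) * k : ℕ) : ℤ)
        = 2 * a + 2 * δ * k - j - k := by
      push_cast [Nat.cast_sub haj, Nat.cast_sub hδ]
      ring
    rw [hcast] at ht
    have hδ' : δ = 0 ∨ δ = 1 := by omega
    have hkn' : (k : ℤ) ≤ (n : ℤ) - 1 := by omega
    have hjb : (j : ℤ) + k ≤ 2 * n := by omega
    have haj' : (a : ℤ) ≤ j := Nat.cast_le.mpr haj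
    have hnpos : (0 : ℤ) < n := by omega
    have ha0 : (0:ℤ) ≤ (a:ℤ) := Nat.cast_nonneg a
    have hk0 : (0:ℤ) ≤ (k:ℤ) := Nat.cast_nonneg k
    rcases hδ' with h | h <;> subst h <;> push_cast at ht
    · have hub : (n : ℤ) * t ≤ 2 * n := by linarith
      have hlb : -(2 * (n:ℤ)) ≤ n * t := by linarith
      have ht2a : -2 ≤ t := by
        by_contra hc
        have h3t : (n:ℤ) * t ≤ n * (-3) := by
          apply mul_le_mul_of_nonneg_left (by omega) (le_of_lt hnpos)
        linarith
      have ht2b : t ≤ 2 := by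
        by_contra hc
        have h3t : (n:ℤ) * 3 ≤ n * t := by
          apply mul_le_mul_of_nonneg_left (by omega) (le_of_lt hnpos)
        linarith
      interval_cases t <;> omega
    · have hub : (n : ℤ) * t ≤ 2 * n := by linarith
      have hlb : -(2 * (n:ℤ)) ≤ n * t := by linarith
      have ht2a : -2 ≤ t := by
        by_contra hc
        have h3t : (n:ℤ) * t ≤ n * (-3) := by
          apply mul_le_mul_of_nonneg_left (by omega) (le_of_lt hnpos)
        linarith
      have ht2b : t ≤ 2 := by
        by_contra hc
        have h3t : (n:ℤ) * 3 ≤ n * t := by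
          apply mul_le_mul_of_nonneg_left (by omega) (le_of_lt hnpos)
        linarith
      interval_cases t <;> omega
  · rintro (⟨hkj, hpar⟩ | ⟨hkj, hpar⟩)
    · obtain ⟨c, hcj, hceq⟩ : ∃ c : ℕ, c ≤ j ∧ 2 * c = j + k := ⟨(j + k) / 2, by omega, by omega⟩
      rw [wzs_iff]
      refine ⟨replicate c g, replicate (j - c) g + {k • g}, ?_, ?_⟩
      · rw [← add_assoc, ← Multiset.replicate_add]
        congr 2; omega
      · rw [Multiset.sum_replicate, Multiset.sum_add, Multiset.sum_replicate,
          Multiset.sum_singleton, ← add_nsmul, smul_eq_iff_dvd hord]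
        exact ⟨0, by omega⟩
    · have hknk : n - k ≤ n := by omega
      obtain ⟨c, hcj, hceq⟩ : ∃ c : ℕ, c ≤ j ∧ 2 * c + n = j + k :=
        ⟨(j + k - n) / 2, by omega, by omega⟩
      rw [wzs_iff]
      refine ⟨replicate c g, replicate (j - c) g + {k • g}, ?_, ?_⟩
      · rw [← add_assoc, ← Multiset.replicate_add]
        congr 2; omega
      · rw [Multiset.sum_replicate, Multiset.sum_add, Multiset.sum_replicate,
          Multiset.sum_singleton, ← add_nsmul, smul_eq_iff_dvd hord]
        exact ⟨-1, by omega⟩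

end Char
section Atoms
open Multiset
variable {G : Type*} [AddCommGroup G] {g : G} {n : ℕ}

theorem split_rep {A B : Multiset G} {j : ℕ} (h : A + B = replicate j g) :
    ∃ a, a ≤ j ∧ A = replicate a g ∧ B = replicate (j - a) g := by
  have hA : A ≤ replicate j g := h ▸ Multiset.le_add_right A B
  obtain ⟨a, hadef⟩ : ∃ a, Multiset.card A = a := ⟨_, rfl⟩
  have hAe : A = replicate a g := by
    rw [← hadef]
    exact Multiset.eq_replicate_card.mpr fun y hy =>
      Multiset.eq_of_mem_replicate (Multiset.mem_of_le hA hy)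
  have haj : a ≤ j := by
    rw [← hadef]
    simpa using Multiset.card_le_card hA
  refine ⟨a, haj, hAe, ?_⟩
  have h2 : replicate a g + B = replicate j g := by rw [← hAe]; exact h
  have h3 : replicate a g + replicate (j - a) g = replicate j g := by
    rw [← Multiset.replicate_add]; congr 1; omega
  exact add_left_cancel (h2.trans h3.symm)

theorem rep_ne_zero {j : ℕ} (hj : 1 ≤ j) : (replicate j g : Multiset G) ≠ 0 := by
  intro h
  have := congrArg Multiset.card h
  simp at this
  omega

theorem atom_rep_eq (hord : addOrderOf g = n) (h3 : 3 ≤ n) (hodd : Odd n) {j : ℕ}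
    (h : IsAtomPM (replicate j g)) : j = 2 ∨ j = n := by
  obtain ⟨m, hm⟩ := hodd
  obtain ⟨hne, hwzs, hsplit⟩ := h
  have hj1 : 1 ≤ j := by
    by_contra hc
    exact hne (by simp [show j = 0 by omega])
  rw [wzs_rep_iff hord h3 ⟨m, hm⟩] at hwzs
  by_contra hc
  push_neg at hc
  obtain ⟨hc2, hcn⟩ := hc
  -- find a split: either (2, j-2) or (n, j-n)
  rcases hwzs with h2 | hn
  · -- j even, j ≥ 4
    have hj4 : 4 ≤ j := by omega
    have := hsplit (replicate 2 g) (replicate (j - 2) g)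
      ((wzs_rep_iff hord h3 ⟨m, hm⟩ 2).mpr (Or.inl (by omega)))
      ((wzs_rep_iff hord h3 ⟨m, hm⟩ (j - 2)).mpr (Or.inl (by omega)))
      (by rw [← Multiset.replicate_add]; congr 1; omega)
    rcases this with h | h
    · exact rep_ne_zero (by omega) h
    · exact rep_ne_zero (by omega) h
  · -- n ≤ j
    rcases Nat.even_or_odd j with he | ho
    · obtain ⟨w, hw⟩ := he
      have hj4 : 4 ≤ j := by omega
      have := hsplit (replicate 2 g) (replicate (j - 2) g)
        ((wzs_rep_iff hord h3 ⟨m, hm⟩ 2).mpr (Or.inl (by omega)))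
        ((wzs_rep_iff hord h3 ⟨m, hm⟩ (j - 2)).mpr (Or.inl (by omega)))
        (by rw [← Multiset.replicate_add]; congr 1; omega)
      rcases this with h | h
      · exact rep_ne_zero (by omega) h
      · exact rep_ne_zero (by omega) h
    · obtain ⟨w, hw⟩ := ho
      have hjn2 : n + 2 ≤ j := by omega
      have := hsplit (replicate n g) (replicate (j - n) g)
        ((wzs_rep_iff hord h3 ⟨m, hm⟩ n).mpr (Or.inr (le_refl n)))
        ((wzs_rep_iff hord h3 ⟨m, hm⟩ (j - n)).mpr (Or.inl (by omega)))
        (by rw [← Multiset.replicate_add]; congr 1; omega)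
      rcases this with h | h
      · exact rep_ne_zero (by omega) h
      · exact rep_ne_zero (by omega) h

theorem atom_rep_two (hord : addOrderOf g = n) (h3 : 3 ≤ n) (hodd : Odd n) :
    IsAtomPM (replicate 2 g : Multiset G) := by
  obtain ⟨m, hm⟩ := hodd
  refine ⟨rep_ne_zero (by omega), (wzs_rep_iff hord h3 ⟨m, hm⟩ 2).mpr (Or.inl (by omega)), ?_⟩
  intro A B hA hB hAB
  obtain ⟨a, ha2, hAe, hBe⟩ := split_rep hAB
  rw [hAe, wzs_rep_iff hord h3 ⟨m, hm⟩] at hA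
  rw [hBe, wzs_rep_iff hord h3 ⟨m, hm⟩] at hB
  have : a = 0 ∨ a = 2 := by omega
  rcases this with h | h
  · left; rw [hAe, h]; rfl
  · right; rw [hBe, h]; rfl

theorem atom_rep_n (hord : addOrderOf g = n) (h3 : 3 ≤ n) (hodd : Odd n) :
    IsAtomPM (replicate n g : Multiset G) := by
  obtain ⟨m, hm⟩ := hodd
  refine ⟨rep_ne_zero (by omega), (wzs_rep_iff hord h3 ⟨m, hm⟩ n).mpr (Or.inr (le_refl n)), ?_⟩
  intro A B hA hB hAB
  obtain ⟨a, ha2, hAe, hBe⟩ := split_rep hAB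
  rw [hAe, wzs_rep_iff hord h3 ⟨m, hm⟩] at hA
  rw [hBe, wzs_rep_iff hord h3 ⟨m, hm⟩] at hB
  have : a = 0 ∨ a = n := by omega
  rcases this with h | h
  · left; rw [hAe, h]; rfl
  · right; rw [hBe]
    have h0 : n - a = 0 := by omega
    rw [h0]; rfl

theorem atom_mix_only (hord : addOrderOf g = n) (h3 : 3 ≤ n) (hodd : Odd n)
    {k : ℕ} (hk1 : 1 ≤ k) (hkn : k ≤ n - 1) {j : ℕ} (hj : j ≤ 2 * n - k)
    (h : IsAtomPM (replicate j g + {k • g})) : j = k ∨ j = n - k := by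
  obtain ⟨m, hm⟩ := hodd
  obtain ⟨hne, hwzs, hsplit⟩ := h
  rw [wzs_mix_iff hord h3 ⟨m, hm⟩ hk1 hkn hj] at hwzs
  by_contra hc
  push_neg at hc
  obtain ⟨hck, hcnk⟩ := hc
  have hj2 : 2 ≤ j := by
    rcases hwzs with ⟨h1, h2⟩ | ⟨h1, h2⟩ <;> omega
  have hpar : (j - 2) % 2 = j % 2 := by omega
  have hB : IsWZS (pmWeights G) (replicate (j - 2) g + {k • g}) := by
    rw [wzs_mix_iff hord h3 ⟨m, hm⟩ hk1 hkn (by omega)]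
    rcases hwzs with ⟨h1, h2⟩ | ⟨h1, h2⟩
    · exact Or.inl ⟨by omega, by omega⟩
    · exact Or.inr ⟨by omega, by omega⟩
  have := hsplit (replicate 2 g) (replicate (j - 2) g + {k • g})
    ((wzs_rep_iff hord h3 ⟨m, hm⟩ 2).mpr (Or.inl (by omega))) hB
    (by rw [← add_assoc, ← Multiset.replicate_add]; congr 2; omega)
  rcases this with h | h
  · exact rep_ne_zero (by omega) h
  · have := congrArg Multiset.card h
    simp at this

theorem atom_mix (hord : addOrderOf g = n) (h3 : 3 ≤ n) (hodd : Odd n)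
    {k : ℕ} (hk1 : 1 ≤ k) (hkn : k ≤ n - 1) {j : ℕ} (hj : j = k ∨ j = n - k) :
    IsAtomPM (replicate j g + {k • g}) := by
  obtain ⟨m, hm⟩ := hodd
  refine ⟨?_, ?_, ?_⟩
  · intro h
    have := congrArg Multiset.card h
    simp at this
  · rw [wzs_mix_iff hord h3 ⟨m, hm⟩ hk1 hkn (by omega)]
    rcases hj with h | h
    · exact Or.inl ⟨by omega, by omega⟩
    · exact Or.inr ⟨by omega, by omega⟩
  · intro A B hA hB hAB
    have hAle : A ≤ replicate j g + {k • g} := hAB ▸ Multiset.le_add_right A B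
    obtain ⟨a, δ, haj, hδ, hAe⟩ := sub_struct hAle
    have hBe := compl_struct hAB haj hδ hAe
    have hδ' : δ = 0 ∨ δ = 1 := by omega
    rcases hδ' with h | h <;> subst h
    · -- A is pure
      rcases Nat.eq_zero_or_pos a with ha0 | ha1
      · left; rw [hAe, ha0]; rfl
      · exfalso
        rw [hAe] at hA
        simp only [Multiset.replicate_zero, add_zero] at hA
        rw [wzs_rep_iff hord h3 ⟨m, hm⟩] at hA
        rw [hBe] at hB
        simp only [Nat.sub_zero, Multiset.replicate_one] at hB
        rw [wzs_mix_iff hord h3 ⟨m, hm⟩ hk1 hkn (by omega)] at hB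
        rcases hj with h | h <;> rcases hA with hA | hA <;>
          rcases hB with ⟨h1, h2⟩ | ⟨h1, h2⟩ <;> omega
    · -- B is pure
      rcases Nat.eq_zero_or_pos (j - a) with ha0 | ha1
      · right; rw [hBe, ha0]; rfl
      · exfalso
        rw [hBe] at hB
        simp only [Nat.sub_self, Multiset.replicate_zero, add_zero] at hB
        rw [wzs_rep_iff hord h3 ⟨m, hm⟩] at hB
        rw [hAe] at hA
        simp only [Multiset.replicate_one] at hA
        rw [wzs_mix_iff hord h3 ⟨m, hm⟩ hk1 hkn (by omega)] at hA
        rcases hj with h | h <;> rcases hA with ⟨h1, h2⟩ | ⟨h1, h2⟩ <;>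
          rcases hB with hB | hB <;> omega

end Atoms
section Lists
open Multiset

theorem mem_le_listsum {α : Type*} {l : List (Multiset α)} {A : Multiset α} (h : A ∈ l) :
    A ≤ l.sum := by
  induction l with
  | nil => simp at h
  | cons B t ih =>
    rw [List.sum_cons]
    rcases List.mem_cons.mp h with rfl | h
    · exact Multiset.le_add_right A t.sum
    · exact le_trans (ih h) (Multiset.le_add_left _ _)

theorem count_listsum {α : Type*} [DecidableEq α] (x : α) (l : List (Multiset α)) :
    l.sum.count x = (l.map (Multiset.count x)).sum := by
  induction l with
  | nil => simp
  | cons B t ih => simp [Multiset.count_add, ih]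

theorem extract_x {α : Type*} [DecidableEq α] {l : List (Multiset α)} {x : α}
    (h : (l.map (Multiset.count x)).sum = 1) :
    ∃ A t, l.Perm (A :: t) ∧ A.count x = 1 ∧ ∀ B ∈ t, x ∉ B := by
  induction l with
  | nil => simp at h
  | cons B t ih =>
    rw [List.map_cons, List.sum_cons] at h
    rcases Nat.eq_zero_or_pos (B.count x) with h0 | h1
    · obtain ⟨A, t', hperm, h1, h2⟩ := ih (by omega)
      refine ⟨A, B :: t', ?_, h1, ?_⟩
      · exact ((hperm.cons B).trans (List.Perm.swap A B t'))
      · intro C hC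
        rcases List.mem_cons.mp hC with rfl | hC
        · exact Multiset.count_eq_zero.mp h0
        · exact h2 C hC
    · have hB1 : B.count x = 1 := by omega
      have hrest : (t.map (Multiset.count x)).sum = 0 := by omega
      refine ⟨B, t, List.Perm.refl _, hB1, ?_⟩
      intro C hC
      have : Multiset.count x C = 0 := by
        have := List.sum_eq_zero_iff.mp hrest (Multiset.count x C) (List.mem_map_of_mem hC)
        exact this
      exact Multiset.count_eq_zero.mp this

theorem pure_sum {G : Type*} [AddCommGroup G] {g : G} {n : ℕ} {l : List (Multiset G)}
    (h : ∀ A ∈ l, A = replicate 2 g ∨ A = replicate n g) :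
    ∃ a b, a + b = l.length ∧ l.sum = replicate (a * n + 2 * b) g := by
  induction l with
  | nil => exact ⟨0, 0, rfl, by simp⟩
  | cons B t ih =>
    obtain ⟨a, b, hl, hs⟩ := ih (fun A hA => h A (List.mem_cons_of_mem B hA))
    rcases h B List.mem_cons_self with hB | hB
    · refine ⟨a, b + 1, by simp [← hl]; omega, ?_⟩
      rw [List.sum_cons, hs, hB, ← Multiset.replicate_add]
      congr 1; ring
    · refine ⟨a + 1, b, by simp [← hl]; omega, ?_⟩
      rw [List.sum_cons, hs, hB, ← Multiset.replicate_add]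
      congr 1; ring

theorem listrep_sum {G : Type*} [AddCommGroup G] (g : G) (c : ℕ) :
    (List.replicate c (replicate 2 g)).sum = replicate (2 * c) g := by
  induction c with
  | zero => simp
  | succ c ih =>
    rw [List.replicate_succ, List.sum_cons, ih, ← Multiset.replicate_add]
    congr 1; ring

end Lists

section Main
open Multiset

theorem lset_sub {G : Type*} [AddCommGroup G] {g : G} {n : ℕ}
    (hord : addOrderOf g = n) (h3 : 3 ≤ n) (hodd : Odd n)
    {k : ℕ} (hk1 : 1 ≤ k) (hkn : k ≤ n - 1) {l : List (Multiset G)}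
    (hat : ∀ A ∈ l, IsAtomPM A)
    (hsum : l.sum = replicate (2 * n - k) g + {k • g}) :
    l.length = 2 ∨ l.length = n - k + 1 := by
  classical
  obtain ⟨m, hm⟩ := hodd
  by_cases hx : k • g = g
  · -- then k = 1 and everything is a replicate of g
    have hk : k = 1 := by
      have h1 : k • g = 1 • g := by simpa using hx
      rw [smul_eq_iff_dvd hord] at h1
      obtain ⟨t, ht⟩ := h1
      have htz : t = 0 := by
        rcases lt_trichotomy t 0 with h | h | h
        · exfalso
          have : (n:ℤ) * t ≤ n * (-1) := by
            apply mul_le_mul_of_nonneg_left (by omega) (by omega)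
          omega
        · exact h
        · exfalso
          have : (n:ℤ) * 1 ≤ n * t := by
            apply mul_le_mul_of_nonneg_left (by omega) (by omega)
          omega
      rw [htz, mul_zero] at ht
      omega
    subst hk
    rw [hx] at hsum
    have hsum2 : l.sum = replicate (2 * n) g := by
      rw [hsum, add_comm, Multiset.singleton_add, ← Multiset.replicate_succ]
      congr 1; omega
    have hall : ∀ A ∈ l, A = replicate 2 g ∨ A = replicate n g := by
      intro A hA
      have hle : A ≤ replicate (2 * n) g := hsum2 ▸ mem_le_listsum hA
      obtain ⟨a, hadef⟩ : ∃ a, Multiset.card A = a := ⟨_, rfl⟩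
      have hAe : A = replicate a g := by
        rw [← hadef]
        exact Multiset.eq_replicate_card.mpr fun y hy =>
          Multiset.eq_of_mem_replicate (Multiset.mem_of_le hle hy)
      have := atom_rep_eq hord h3 ⟨m, hm⟩ (hAe ▸ hat A hA)
      rcases this with h | h <;> [left; right] <;> rw [hAe, h]
    obtain ⟨a, b, hlen, hs⟩ := pure_sum hall
    rw [hsum2] at hs
    have hcount : a * n + 2 * b = 2 * n := by
      have h := congrArg Multiset.card hs
      simp at h
      linarith
    have ha2 : a ≤ 2 := by
      have h1 : a * n ≤ 2 * n := by
        calc a * n ≤ a * n + 2 * b := Nat.le_add_right _ _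
          _ = 2 * n := hcount
      exact Nat.le_of_mul_le_mul_right h1 (by omega)
    interval_cases a <;> omega
  · -- k • g ≠ g : extract the unique atom containing k • g
    set x := k • g with hxdef
    have hcx : (l.map (Multiset.count x)).sum = 1 := by
      rw [← count_listsum, hsum, Multiset.count_add, Multiset.count_replicate,
        Multiset.count_singleton]
      simp [hx, Ne.symm hx]
    obtain ⟨A, t, hperm, hcA, hnt⟩ := extract_x hcx
    have hsum' : A + t.sum = replicate (2 * n - k) g + {x} := by
      rw [← List.sum_cons, ← hperm.sum_eq, hsum]
    have hat' : ∀ B ∈ A :: t, IsAtomPM B := fun B hB => hat B (hperm.mem_iff.mpr hB)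
    -- structure of A
    have hAle : A ≤ replicate (2 * n - k) g + {x} := hsum' ▸ Multiset.le_add_right _ _
    obtain ⟨a, δ, haj, hδ, hAe⟩ := sub_struct hAle
    have hδ1 : δ = 1 := by
      have : Multiset.count x A = δ := by
        rw [hAe, Multiset.count_add, Multiset.count_replicate, Multiset.count_replicate]
        simp [hx, Ne.symm hx]
      omega
    subst hδ1
    rw [Multiset.replicate_one] at hAe
    have haA : a = k ∨ a = n - k :=
      atom_mix_only hord h3 ⟨m, hm⟩ hk1 hkn haj (hAe ▸ hat' A List.mem_cons_self)
    -- structure of members of t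
    have hallt : ∀ B ∈ t, B = replicate 2 g ∨ B = replicate n g := by
      intro B hB
      have hBle : B ≤ replicate (2 * n - k) g + {x} := by
        refine le_trans ?_ (le_of_eq hsum')
        refine le_trans (mem_le_listsum hB) (Multiset.le_add_left _ _)
      obtain ⟨b, δ', hbj, hδ', hBe⟩ := sub_struct hBle
      have hδ'0 : δ' = 0 := by
        by_contra hc
        have : δ' = 1 := by omega
        subst this
        apply hnt B hB
        rw [hBe]
        exact Multiset.mem_add.mpr (Or.inr (by simp))
      subst hδ'0
      simp only [Multiset.replicate_zero, add_zero] at hBe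
      have := atom_rep_eq hord h3 ⟨m, hm⟩ (hBe ▸ hat' B (List.mem_cons_of_mem A hB))
      rcases this with h | h <;> [left; right] <;> rw [hBe, h]
    obtain ⟨c, d, hlen, hs⟩ := pure_sum hallt
    rw [hs, hAe] at hsum'
    have hcount : a + (c * n + 2 * d) = 2 * n - k := by
      have h := congrArg (Multiset.count g) hsum'
      simp [Multiset.count_add, Multiset.count_replicate, Multiset.count_singleton,
        Ne.symm hx] at h
      linarith
    have hlenl : l.length = t.length + 1 := by
      rw [hperm.length_eq]; rfl
    have hc2 : c ≤ 2 := by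
      have h1 : c * n ≤ 2 * n := by
        calc c * n ≤ c * n + (a + 2 * d) := Nat.le_add_right _ _
          _ = a + (c * n + 2 * d) := by ring
          _ = 2 * n - k := hcount
          _ ≤ 2 * n := Nat.sub_le _ _
      exact Nat.le_of_mul_le_mul_right h1 (by omega)
    interval_cases c <;> rcases haA with rfl | rfl <;> omega

end Main
open Multiset in
theorem lset_eq {G : Type*} [AddCommGroup G] {g : G} {n : ℕ}
    (hord : addOrderOf g = n) (h3 : 3 ≤ n) (hodd : Odd n)
    {k : ℕ} (hk1 : 1 ≤ k) (hkn : k ≤ n - 1) :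
    LSet (Multiset.replicate (2 * n - k) g + ({k • g} : Multiset G))
      = ({2, n - k + 1} : Set ℕ) := by
  ext ℓ
  simp only [Set.mem_insert_iff, Set.mem_singleton_iff]
  constructor
  · rintro ⟨l, hat, hsum, rfl⟩
    exact lset_sub hord h3 hodd hk1 hkn hat hsum
  · rintro (rfl | rfl)
    · refine ⟨[replicate n g, replicate (n - k) g + {k • g}], ?_, ?_, rfl⟩
      · intro A hA
        rcases List.mem_cons.mp hA with rfl | hA
        · exact atom_rep_n hord h3 hodd
        · rcases List.mem_cons.mp hA with rfl | hA
          · exact atom_mix hord h3 hodd hk1 hkn (Or.inr rfl)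
          · simp at hA
      · show replicate n g + (replicate (n - k) g + {k • g} + 0) = _
        rw [add_zero, ← add_assoc, ← Multiset.replicate_add]
        congr 2
        omega
    · refine ⟨List.replicate (n - k) (replicate 2 g) ++ [replicate k g + {k • g}], ?_, ?_, ?_⟩
      · intro A hA
        rcases List.mem_append.mp hA with hA | hA
        · rw [List.eq_of_mem_replicate hA]
          exact atom_rep_two hord h3 hodd
        · rcases List.mem_cons.mp hA with rfl | hA
          · exact atom_mix hord h3 hodd hk1 hkn (Or.inl rfl)
          · simp at hA
      · rw [List.sum_append, listrep_sum]
        show replicate (2 * (n - k)) g + (replicate k g + {k • g} + 0) = _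
        rw [add_zero, ← add_assoc, ← Multiset.replicate_add]
        congr 2
        omega
      · simp

theorem stmt16 {G : Type*} [AddCommGroup G] [Fintype G]
    (hodd : Odd (Fintype.card G)) (h3 : 3 ≤ Fintype.card G)
    (g : G) (hg : addOrderOf g = Fintype.card G) :
    (∀ k : ℕ, 1 ≤ k → k ≤ Fintype.card G - 1 →
      LSet (Multiset.replicate (2 * Fintype.card G - k) g + ({k • g} : Multiset G))
        = ({2, Fintype.card G - k + 1} : Set ℕ))
    ∧ ∀ d : ℕ, 1 ≤ d → d ≤ Fintype.card G - 2 →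
        ∃ (B : Multiset G) (ℓ : ℕ), ℓ ∈ LSet B ∧ ℓ + d ∈ LSet B ∧
          ∀ j : ℕ, ℓ < j → j < ℓ + d → j ∉ LSet B := by
  set n := Fintype.card G with hn
  have h1 : ∀ k : ℕ, 1 ≤ k → k ≤ n - 1 →
      LSet (Multiset.replicate (2 * n - k) g + ({k • g} : Multiset G))
        = ({2, n - k + 1} : Set ℕ) := fun k hk1 hkn => lset_eq hg h3 hodd hk1 hkn
  refine ⟨h1, ?_⟩
  intro d hd1 hd2
  set k := n - 1 - d with hk
  have hk1 : 1 ≤ k := by omega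
  have hkn : k ≤ n - 1 := by omega
  have hnk : n - k + 1 = 2 + d := by omega
  have hL := h1 k hk1 hkn
  rw [hnk] at hL
  refine ⟨Multiset.replicate (2 * n - k) g + ({k • g} : Multiset G), 2, ?_, ?_, ?_⟩
  · rw [hL]; exact Or.inl rfl
  · rw [hL]; exact Or.inr rfl
  · intro j hj1 hj2
    rw [hL]
    rintro (rfl | rfl) <;> omega
end
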